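/- Let λ ≥ 0, γ ≥ 0 with λ·γ < 1, and let z ∈ ℂⁿ. Let x̂ ∈ ℂⁿ be a minimizer of x ↦ (1/2)·∑_{i=1}^{n} |z_i − x_i|² + λ·P^c_γ(x), and let u ∈ ℝⁿ be a minimizer of v ↦ (1/2)·∑_{i=1}^{n} (|z_i| − v_i)² + λ·P_γ(v), where |z| = (|z_1|, …, |z_n|). Then for every index k: if z_k ≠ 0 then x̂_k = u_k · (z_k / |z_k|), and if z_k = 0 then x̂_k = 0. -/

import Mathlib

open Finset

/-- The penalty `P_gamma(x) = gamma * (sum_{i<m} |x_i| |x_m|) + sum_i |x_i|` on R^n. -/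
noncomputable def P (n : ℕ) (γ : ℝ) (x : Fin n → ℝ) : ℝ :=
  γ * (∑ i : Fin n, ∑ m ∈ Finset.Ioi i, |x i| * |x m|) + ∑ i : Fin n, |x i|

/-- The complex penalty `Pc_gamma(x) = gamma * (sum_{i<m} |x_i| |x_m|) + sum_i |x_i|` on C^n. -/
noncomputable def Pc (n : ℕ) (γ : ℝ) (x : Fin n → ℂ) : ℝ :=
  γ * (∑ i : Fin n, ∑ m ∈ Finset.Ioi i, ‖x i‖ * ‖x m‖) + ∑ i : Fin n, ‖x i‖

/-- The complex cost. -/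
noncomputable def Cc (n : ℕ) (lam γ : ℝ) (z x : Fin n → ℂ) : ℝ :=
  (1 / 2) * ∑ i : Fin n, ‖z i - x i‖ ^ 2 + lam * Pc n γ x

lemma sq_sum_ident (n : ℕ) (d : Fin n → ℝ) :
    (∑ i, d i)^2 = ∑ i, (d i)^2 + 2 * ∑ i, ∑ m ∈ Ioi i, d i * d m := by
  have h := Finset.sum_sum_Ioi_add_eq_sum_sum_off_diag (fun j i : Fin n => d j * d i)
  simp only [Finset.compl_singleton, Finset.sum_erase_eq_sub (Finset.mem_univ _)] at h
  have l1 : ∑ i : Fin n, ∑ j ∈ Ioi i, (d j * d i + d i * d j) = 2 * ∑ i, ∑ j ∈ Ioi i, d i * d j := by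
    rw [Finset.mul_sum]
    exact Finset.sum_congr rfl fun i _ => by
      rw [Finset.mul_sum]; exact Finset.sum_congr rfl fun j _ => by ring
  rw [l1] at h
  have l2 : ∑ i : Fin n, ((∑ j : Fin n, d j * d i) - d i * d i)
      = (∑ j, d j) * (∑ j, d j) - ∑ i, (d i)^2 := by
    rw [Finset.sum_sub_distrib]
    congr 1
    · calc ∑ x : Fin n, ∑ j : Fin n, d j * d x
          = ∑ x : Fin n, (∑ j : Fin n, d j) * d x :=
            Finset.sum_congr rfl fun x _ => (Finset.sum_mul _ _ _).symm
        _ = (∑ j, d j) * (∑ j, d j) := (Finset.mul_sum _ _ _).symm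
    · exact Finset.sum_congr rfl fun i _ => (sq (d i)).symm
  rw [l2] at h
  nlinarith [h]

lemma norm_sq_expand (z x : ℂ) :
    ‖z - x‖ ^ 2 = ‖z‖^2 - 2 * ((starRingEnd ℂ) z * x).re + ‖x‖^2 := by
  simp only [Complex.sq_norm, Complex.normSq_apply, Complex.sub_re,
    Complex.sub_im, Complex.mul_re, Complex.conj_re, Complex.conj_im]
  ring

lemma phase_eq (z x : ℂ) (hz : z ≠ 0) (h : ‖z - x‖ ^ 2 = (‖z‖ - ‖x‖) ^ 2) :
    x = (‖x‖ : ℂ) * (z / (‖z‖ : ℂ)) := by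
  have hre : ((starRingEnd ℂ) z * x).re = ‖z‖ * ‖x‖ := by
    have h2 := norm_sq_expand z x
    nlinarith [h, h2]
  have habs : ‖(starRingEnd ℂ) z * x‖ = ‖z‖ * ‖x‖ := by
    simp [norm_mul]
  have h3 := Complex.sq_norm ((starRingEnd ℂ) z * x)
  rw [Complex.normSq_apply, habs, hre] at h3
  have him2 : ((starRingEnd ℂ) z * x).im * ((starRingEnd ℂ) z * x).im = 0 := by nlinarith [h3]
  have him : ((starRingEnd ℂ) z * x).im = 0 := mul_self_eq_zero.mp him2
  have hw : (starRingEnd ℂ) z * x = ((‖z‖ * ‖x‖ : ℝ) : ℂ) := by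
    apply Complex.ext <;> simp [hre, him]
  have hnz : ((‖z‖ : ℝ) : ℂ) ≠ 0 := by simpa using norm_ne_zero_iff.mpr hz
  have hmc : z * ((starRingEnd ℂ) z * x) = z * ((‖z‖ * ‖x‖ : ℝ) : ℂ) := by rw [hw]
  rw [← mul_assoc, Complex.mul_conj] at hmc
  have hns : (Complex.normSq z : ℂ) = ((‖z‖ : ℝ) : ℂ) * ((‖z‖ : ℝ) : ℂ) := by
    rw [Complex.normSq_eq_norm_sq]; push_cast; ring
  rw [hns] at hmc
  have key : x * ((‖z‖ : ℝ) : ℂ) = ((‖x‖ : ℝ) : ℂ) * z := by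
    apply mul_left_cancel₀ hnz
    push_cast at hmc ⊢
    linear_combination hmc
  rw [show ((‖x‖:ℝ):ℂ) * (z / ((‖z‖:ℝ):ℂ)) = (((‖x‖:ℝ):ℂ) * z) / ((‖z‖:ℝ):ℂ) from by ring,
    eq_div_iff hnz]
  exact key

lemma P_mono (n : ℕ) (γ : ℝ) (hγ : 0 ≤ γ) (w u : Fin n → ℝ) (h : ∀ i, |w i| ≤ |u i|) :
    P n γ w ≤ P n γ u := by
  unfold P
  apply add_le_add
  · apply mul_le_mul_of_nonneg_left _ hγ
    refine Finset.sum_le_sum fun i _ => Finset.sum_le_sum fun m _ => ?_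
    exact mul_le_mul (h i) (h m) (abs_nonneg _) (abs_nonneg _)
  · exact Finset.sum_le_sum fun i _ => h i

lemma P_nonneg_eq (n : ℕ) (γ : ℝ) (v : Fin n → ℝ) (h : ∀ i, 0 ≤ v i) :
    P n γ v = γ * (∑ i, ∑ m ∈ Ioi i, v i * v m) + ∑ i, v i := by
  unfold P
  congr 1
  · congr 1
    exact Finset.sum_congr rfl fun i _ => Finset.sum_congr rfl fun m _ => by
      rw [abs_of_nonneg (h i), abs_of_nonneg (h m)]
  · exact Finset.sum_congr rfl fun i _ => abs_of_nonneg (h i)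

lemma strict_min (n : ℕ) (lam γ : ℝ) (hlam : 0 ≤ lam) (hγ : 0 ≤ γ) (hlγ : lam * γ < 1)
    (a u v : Fin n → ℝ) (hu0 : ∀ i, 0 ≤ u i) (hv0 : ∀ i, 0 ≤ v i)
    (hmin : (1/2) * ∑ i, (a i - u i)^2 + lam * P n γ u ≤
      (1/2) * ∑ i, (a i - ((u i + v i)/2))^2 + lam * P n γ (fun i => (u i + v i)/2))
    (heq : (1/2) * ∑ i, (a i - u i)^2 + lam * P n γ u =
      (1/2) * ∑ i, (a i - v i)^2 + lam * P n γ v) :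
    u = v := by
  have hm0 : ∀ i, 0 ≤ (u i + v i)/2 := fun i => by linarith [hu0 i, hv0 i]
  rw [P_nonneg_eq n γ u hu0] at hmin heq
  rw [P_nonneg_eq n γ v hv0] at heq
  rw [P_nonneg_eq n γ _ hm0] at hmin
  set d : Fin n → ℝ := fun i => u i - v i with hd
  have I1 : (∑ i, (a i - u i)^2) + (∑ i, (a i - v i)^2) - 2 * ∑ i, (a i - ((u i + v i)/2))^2
      = ∑ i, (d i)^2 / 2 := by
    rw [Finset.mul_sum, ← Finset.sum_add_distrib, ← Finset.sum_sub_distrib]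
    exact Finset.sum_congr rfl fun i _ => by simp only [hd]; ring
  have I2 : (∑ i, ∑ m ∈ Ioi i, u i * u m) + (∑ i, ∑ m ∈ Ioi i, v i * v m)
      - 2 * ∑ i, ∑ m ∈ Ioi i, ((u i + v i)/2) * ((u m + v m)/2)
      = ∑ i, ∑ m ∈ Ioi i, d i * d m / 2 := by
    rw [Finset.mul_sum, ← Finset.sum_add_distrib, ← Finset.sum_sub_distrib]
    refine Finset.sum_congr rfl fun i _ => ?_
    rw [Finset.mul_sum, ← Finset.sum_add_distrib, ← Finset.sum_sub_distrib]
    exact Finset.sum_congr rfl fun m _ => by simp only [hd]; ring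
  have I3 : (∑ i, u i) + (∑ i, v i) - 2 * ∑ i, (u i + v i)/2 = 0 := by
    rw [Finset.mul_sum, ← Finset.sum_add_distrib, ← Finset.sum_sub_distrib]
    exact Finset.sum_eq_zero fun i _ => by ring
  have hsplit : ∑ i, (d i)^2 / 2 = (∑ i, (d i)^2) / 2 := by
    rw [Finset.sum_div]
  have hsplit2 : ∑ i, ∑ m ∈ Ioi i, d i * d m / 2 = (∑ i, ∑ m ∈ Ioi i, d i * d m) / 2 := by
    rw [Finset.sum_div]
    exact Finset.sum_congr rfl fun i _ => by rw [Finset.sum_div]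
  have hsq := sq_sum_ident n d
  have hd2 : 0 ≤ ∑ i, (d i)^2 := Finset.sum_nonneg fun i _ => sq_nonneg _
  have c0 : (1/2) * ((∑ i, (a i - u i)^2) + (∑ i, (a i - v i)^2)
      - 2 * ∑ i, (a i - ((u i + v i)/2))^2) = (1/2) * ∑ i, (d i)^2 / 2 := by rw [I1]
  have c1 : (lam * γ) * ((∑ i, ∑ m ∈ Ioi i, u i * u m) + (∑ i, ∑ m ∈ Ioi i, v i * v m)
      - 2 * ∑ i, ∑ m ∈ Ioi i, ((u i + v i)/2) * ((u m + v m)/2))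
      = (lam * γ) * ∑ i, ∑ m ∈ Ioi i, d i * d m / 2 := by rw [I2]
  have c2 : lam * ((∑ i, u i) + (∑ i, v i) - 2 * ∑ i, (u i + v i)/2) = 0 := by
    rw [I3, mul_zero]
  have hzero : ∑ i, (d i)^2 ≤ 0 := by
    nlinarith [sq_nonneg (∑ i, d i), mul_nonneg hlam hγ, hmin, heq, c0, c1, c2, hsq,
      hsplit, hsplit2, hd2, mul_nonneg (mul_nonneg hlam hγ) hd2,
      mul_nonneg (mul_nonneg hlam hγ) (sq_nonneg (∑ i, d i))]
  funext i
  have hall := (Finset.sum_eq_zero_iff_of_nonneg (fun i _ => sq_nonneg (d i))).mp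
    (le_antisymm hzero hd2) i (Finset.mem_univ i)
  have hdi : d i = 0 := by
    have := sq_eq_zero_iff.mp hall
    exact this
  simp only [hd] at hdi
  linarith

/-- Prop. 6: the complex threshold is obtained by thresholding the magnitudes and
restoring the arguments. -/
theorem complex_thold (n : ℕ) (lam γ : ℝ) (hlam : 0 ≤ lam) (hγ : 0 ≤ γ)
    (hlγ : lam * γ < 1) (z : Fin n → ℂ) (xh : Fin n → ℂ) (u : Fin n → ℝ)
    (hxh : ∀ x, Cc n lam γ z xh ≤ Cc n lam γ z x)
    (hu : ∀ v : Fin n → ℝ,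
      (1 / 2) * ∑ i : Fin n, (‖z i‖ - u i) ^ 2 + lam * P n γ u ≤
      (1 / 2) * ∑ i : Fin n, (‖z i‖ - v i) ^ 2 + lam * P n γ v) :
    ∀ k : Fin n,
      (z k ≠ 0 → xh k = (u k : ℂ) * (z k / (‖z k‖ : ℂ))) ∧
      (z k = 0 → xh k = 0) := by
  -- Step 1: the real minimizer is nonnegative, and vanishes where z vanishes
  set w : Fin n → ℝ := fun k => if z k = 0 then 0 else |u k| with hwdef
  have hterm : ∀ k, (‖z k‖ - w k)^2 ≤ (‖z k‖ - u k)^2 := by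
    intro k
    by_cases hzk : z k = 0
    · simp only [hwdef, if_pos hzk, hzk, norm_zero]
      nlinarith [sq_nonneg (u k)]
    · simp only [hwdef, if_neg hzk]
      nlinarith [le_abs_self (u k), sq_abs (u k), norm_nonneg (z k)]
  have hPw : P n γ w ≤ P n γ u := by
    apply P_mono n γ hγ
    intro i
    by_cases hzi : z i = 0
    · simp [hwdef, hzi]
    · simp [hwdef, hzi, abs_abs]
  have huw := hu w
  have hsumle : ∑ i : Fin n, (‖z i‖ - w i)^2 ≤ ∑ i : Fin n, (‖z i‖ - u i)^2 :=
    Finset.sum_le_sum fun i _ => hterm i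
  have hsum_eq : ∑ i : Fin n, (‖z i‖ - w i)^2 = ∑ i : Fin n, (‖z i‖ - u i)^2 := by
    have hlP : lam * P n γ w ≤ lam * P n γ u := mul_le_mul_of_nonneg_left hPw hlam
    linarith
  have htermeq : ∀ k, (‖z k‖ - w k)^2 = (‖z k‖ - u k)^2 := by
    intro k
    exact (Finset.sum_eq_sum_iff_of_le fun i _ => hterm i).mp hsum_eq k (Finset.mem_univ k)
  have hu0 : ∀ k, 0 ≤ u k ∧ (z k = 0 → u k = 0) := by
    intro k
    by_cases hzk : z k = 0
    · have h := htermeq k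
      simp only [hwdef, if_pos hzk, hzk, norm_zero] at h
      have : u k ^ 2 = 0 := by nlinarith [h]
      have huk : u k = 0 := sq_eq_zero_iff.mp this
      exact ⟨le_of_eq huk.symm, fun _ => huk⟩
    · have h := htermeq k
      simp only [hwdef, if_neg hzk] at h
      have hpos : 0 < ‖z k‖ := norm_pos_iff.mpr hzk
      have hmul : ‖z k‖ * |u k| = ‖z k‖ * u k := by nlinarith [h, sq_abs (u k)]
      have habs : |u k| = u k := mul_left_cancel₀ (ne_of_gt hpos) hmul
      exact ⟨habs ▸ abs_nonneg (u k), fun hz => absurd hz hzk⟩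
  -- Step 2: the candidate complex vector
  set xstar : Fin n → ℂ := fun k => (u k : ℂ) * (z k / (‖z k‖ : ℂ)) with hxs
  have hnx : ∀ k, ‖xstar k‖ = u k := by
    intro k
    by_cases hzk : z k = 0
    · simp [hxs, hzk, (hu0 k).2 hzk]
    · have h1 : ‖z k‖ ≠ 0 := norm_ne_zero_iff.mpr hzk
      simp only [hxs, norm_mul, norm_div, Complex.norm_real, norm_norm]
      rw [div_self h1, mul_one, Real.norm_eq_abs, abs_of_nonneg (hu0 k).1]
  have hzx : ∀ k, ‖z k - xstar k‖^2 = (‖z k‖ - u k)^2 := by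
    intro k
    by_cases hzk : z k = 0
    · simp [hxs, hzk, (hu0 k).2 hzk]
    · have h1 : ((‖z k‖ : ℝ) : ℂ) ≠ 0 := by simpa using norm_ne_zero_iff.mpr hzk
      have hid : ((‖z k‖ : ℝ) : ℂ) * (z k / ((‖z k‖ : ℝ) : ℂ)) = z k := by
        rw [mul_comm, div_mul_cancel₀ _ h1]
      have hr : z k - xstar k = (((‖z k‖ - u k : ℝ)) : ℂ) * (z k / ((‖z k‖ : ℝ) : ℂ)) := by
        simp only [hxs]
        rw [Complex.ofReal_sub, sub_mul, hid]
      rw [hr, norm_mul, norm_div, Complex.norm_real, Complex.norm_real, norm_norm,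
        div_self (norm_ne_zero_iff.mpr hzk), mul_one, Real.norm_eq_abs, sq_abs]
  have hPcstar : Pc n γ xstar = P n γ u := by
    unfold Pc P
    congr 1
    · congr 1
      exact Finset.sum_congr rfl fun i _ => Finset.sum_congr rfl fun m _ => by
        rw [hnx i, hnx m, abs_of_nonneg (hu0 i).1, abs_of_nonneg (hu0 m).1]
    · exact Finset.sum_congr rfl fun i _ => by rw [hnx i, abs_of_nonneg (hu0 i).1]
  have hCxstar : Cc n lam γ z xstar
      = (1 / 2) * ∑ i : Fin n, (‖z i‖ - u i)^2 + lam * P n γ u := by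
    unfold Cc
    rw [hPcstar]
    congr 2
    exact Finset.sum_congr rfl fun i _ => hzx i
  -- Step 3: chain of inequalities
  have hPcx : Pc n γ xh = P n γ (fun k => ‖xh k‖) := by
    unfold Pc P
    congr 1
    · congr 1
      exact Finset.sum_congr rfl fun i _ => Finset.sum_congr rfl fun m _ => by
        rw [abs_norm, abs_norm]
    · exact Finset.sum_congr rfl fun i _ => (abs_norm _).symm
  have hterm2 : ∀ k, (‖z k‖ - ‖xh k‖)^2 ≤ ‖z k - xh k‖^2 := by
    intro k
    rw [← sq_abs (‖z k‖ - ‖xh k‖)]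
    exact pow_le_pow_left₀ (abs_nonneg _) (abs_norm_sub_norm_le _ _) 2
  have hF : (1 / 2) * ∑ i : Fin n, (‖z i‖ - ‖xh i‖)^2 + lam * P n γ (fun k => ‖xh k‖)
      ≤ Cc n lam γ z xh := by
    unfold Cc
    rw [hPcx]
    have := Finset.sum_le_sum (fun i (_ : i ∈ (univ : Finset (Fin n))) => hterm2 i)
    linarith
  have h1 := hxh xstar
  have h3 := hu (fun k => ‖xh k‖)
  have hFv_eq : (1 / 2) * ∑ i : Fin n, (‖z i‖ - ‖xh i‖)^2 + lam * P n γ (fun k => ‖xh k‖)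
      = Cc n lam γ z xh := by linarith [h1, hCxstar, h3, hF]
  have hFu_eq : (1 / 2) * ∑ i : Fin n, (‖z i‖ - u i)^2 + lam * P n γ u
      = (1 / 2) * ∑ i : Fin n, (‖z i‖ - ‖xh i‖)^2 + lam * P n γ (fun k => ‖xh k‖) := by
    linarith [h1, hCxstar, h3, hF]
  have hsum2 : ∑ i : Fin n, (‖z i‖ - ‖xh i‖)^2 = ∑ i : Fin n, ‖z i - xh i‖^2 := by
    have := hFv_eq
    unfold Cc at this
    rw [hPcx] at this
    linarith
  have htermeq2 : ∀ k, (‖z k‖ - ‖xh k‖)^2 = ‖z k - xh k‖^2 := by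
    intro k
    exact (Finset.sum_eq_sum_iff_of_le fun i _ => hterm2 i).mp hsum2 k (Finset.mem_univ k)
  -- Step 4: uniqueness of the nonnegative minimizer
  have huv : u = fun k => ‖xh k‖ := by
    apply strict_min n lam γ hlam hγ hlγ (fun i => ‖z i‖) u (fun k => ‖xh k‖)
      (fun i => (hu0 i).1) (fun i => norm_nonneg _)
    · exact hu (fun i => (u i + ‖xh i‖)/2)
    · exact hFu_eq
  -- Step 5: conclude
  intro k
  constructor
  · intro hzk
    have he : ‖z k - xh k‖ ^ 2 = (‖z k‖ - ‖xh k‖) ^ 2 := (htermeq2 k).symm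
    have hp := phase_eq (z k) (xh k) hzk he
    have h5 : u k = ‖xh k‖ := congrFun huv k
    rw [hp, h5]
  · intro hzk
    have h5 : u k = ‖xh k‖ := congrFun huv k
    have h6 : u k = 0 := (hu0 k).2 hzk
    have : ‖xh k‖ = 0 := by rw [← h5, h6]
    exact norm_eq_zero.mp this
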